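/- arXiv:1411.7661 — 2 statements merged into one kernel-verified Lean document; each statement's English description precedes it below -/
import Mathlib

section
/- Let Γ be a group with a subgroup Δ of index 2, fix an element γ₀ ∈ Γ ∖ Δ, let A be a commutative ring and let d ≥ 1. Then there is a bijection between (i) the set of group homomorphisms r : Γ → 𝒢_d(A) such that r⁻¹(𝒢_d⁰(A)) = Δ, and (ii) the set of triples (ρ, μ, P), where ρ : Δ → GL_d(A) and μ : Γ → Aˣ are group homomorphisms and P ∈ GL_d(A) is a matrix satisfying ρ(δ)ᵀ · P⁻¹ · ρ(γ₀δγ₀⁻¹) = μ(δ) · P⁻¹ for all δ ∈ Δ, and P⁻¹ · ρ(γ₀²) = −μ(γ₀) · (Pᵀ)⁻¹. Under this bijection, ρ is the GL_d-component of r restricted to Δ, μ = ν ∘ r, and r(γ₀) = (P, −μ(γ₀))·ȷ. -/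
open Matrix

namespace PaperCHT

variable (d : ℕ) (A : Type*) [CommRing A]

/-- `GL_d(A)`, realized as the unit group of the matrix ring. -/
abbrev GLd : Type _ := (Matrix (Fin d) (Fin d) A)ˣ

/-- The transpose-inverse automorphism `g ↦ (gᵀ)⁻¹` of `GL_d(A)`. -/
def tinv : GLd d A →* GLd d A where
  toFun g :=
    ⟨((g⁻¹).val)ᵀ, (g.val)ᵀ,
      by rw [← Matrix.transpose_mul, Units.mul_inv, Matrix.transpose_one],
      by rw [← Matrix.transpose_mul, Units.inv_mul, Matrix.transpose_one]⟩
  map_one' := Units.ext (by simp)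
  map_mul' g h := Units.ext (by simp [_root_.mul_inv_rev, Matrix.transpose_mul])

@[simp] lemma tinv_val (g : GLd d A) : (tinv d A g).val = ((g⁻¹).val)ᵀ := rfl

/-- Scalar matrices, as a homomorphism `Aˣ → GL_d(A)`. -/
def scalarU : Aˣ →* GLd d A :=
  Units.map ((Matrix.scalar (Fin d)).toMonoidHom)

@[simp] lemma scalarU_val (a : Aˣ) : (scalarU d A a).val = Matrix.scalar (Fin d) (a : A) := rfl

lemma scalarU_commute (a : Aˣ) (u : GLd d A) : Commute (scalarU d A a) u := by
  apply Units.ext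
  rw [Units.val_mul, Units.val_mul, scalarU_val]
  exact (Matrix.scalar_commute (a : A) (fun r => mul_comm _ _) u.val).eq

lemma tinv_scalarU (a : Aˣ) : tinv d A (scalarU d A a) = scalarU d A a⁻¹ := by
  apply Units.ext
  rw [tinv_val, ← map_inv]
  simp [Matrix.scalar_apply, Matrix.transpose_nonsing_inv]

lemma tinv_tinv (g : GLd d A) : tinv d A (tinv d A g) = g := by
  apply Units.ext
  rw [tinv_val, ← map_inv, tinv_val, inv_inv, transpose_transpose]


/-- The order-two automorphism `(g, a) ↦ (a·(gᵀ)⁻¹, a)` of `GL_d(A) × Aˣ` given by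
conjugation by `ȷ`. -/
def iotaHom : (GLd d A × Aˣ) →* (GLd d A × Aˣ) where
  toFun x := (scalarU d A x.2 * tinv d A x.1, x.2)
  map_one' := by
    refine Prod.ext ?_ rfl
    show scalarU d A 1 * tinv d A 1 = 1
    simp
  map_mul' x y := by
    refine Prod.ext ?_ rfl
    show scalarU d A (x.2 * y.2) * tinv d A (x.1 * y.1)
        = scalarU d A x.2 * tinv d A x.1 * (scalarU d A y.2 * tinv d A y.1)
    rw [_root_.map_mul, _root_.map_mul]
    exact (scalarU_commute d A y.2 (tinv d A x.1)).mul_mul_mul_comm _ _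

lemma iotaHom_invol (x : GLd d A × Aˣ) : iotaHom d A (iotaHom d A x) = x := by
  obtain ⟨g, a⟩ := x
  refine Prod.ext ?_ rfl
  show scalarU d A a * tinv d A (scalarU d A a * tinv d A g) = g
  rw [_root_.map_mul, tinv_scalarU, tinv_tinv, ← mul_assoc, ← _root_.map_mul,
    mul_inv_cancel, _root_.map_one, one_mul]

/-- The automorphism `iotaHom` as an element of `MulAut (GL_d(A) × Aˣ)`. -/
def iota : MulAut (GLd d A × Aˣ) :=
  { toFun := iotaHom d A
    invFun := iotaHom d A
    left_inv := iotaHom_invol d A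
    right_inv := iotaHom_invol d A
    map_mul' := map_mul (iotaHom d A) }

lemma iota_sq : iota d A ^ 2 = 1 := by
  refine MulEquiv.ext fun x => ?_
  rw [pow_two, MulAut.mul_apply, MulAut.one_apply]
  exact iotaHom_invol d A x

/-- The action of `{1, ȷ} = ℤ/2` on `GL_d(A) × Aˣ` defining `𝒢_d(A)`. -/
def phi : Multiplicative (ZMod 2) →* MulAut (GLd d A × Aˣ) where
  toFun x := iota d A ^ (Multiplicative.toAdd x).val
  map_one' := by
    show iota d A ^ (Multiplicative.toAdd (1 : Multiplicative (ZMod 2))).val = 1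
    simp
  map_mul' x y := by
    show iota d A ^ _ = iota d A ^ _ * iota d A ^ _
    rw [toAdd_mul, ZMod.val_add, ← pow_eq_pow_mod _ (iota_sq d A), pow_add]

/-- The Clozel–Harris–Taylor group `𝒢_d(A) = (GL_d(A) × GL_1(A)) ⋊ {1, ȷ}`. -/
abbrev Gcal : Type _ := (GLd d A × Aˣ) ⋊[phi d A] Multiplicative (ZMod 2)

/-- The element `ȷ ∈ 𝒢_d(A)`. -/
def jj : Gcal d A := SemidirectProduct.inr (Multiplicative.ofAdd 1)

/-- The connected component `𝒢_d⁰(A) = GL_d(A) × GL_1(A)`, as a subgroup of `𝒢_d(A)`. -/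
def Gzero : Subgroup (Gcal d A) :=
  (SemidirectProduct.inl : (GLd d A × Aˣ) →* Gcal d A).range

lemma snd_iota_pow (m : ℕ) : ∀ n : GLd d A × Aˣ, ((iota d A ^ m) n).2 = n.2 := by
  induction m with
  | zero => intro n; simp
  | succ m ih =>
    intro n
    rw [pow_succ, MulAut.mul_apply]
    exact (ih _).trans rfl

lemma snd_phi (x : Multiplicative (ZMod 2)) (n : GLd d A × Aˣ) :
    ((phi d A x) n).2 = n.2 :=
  snd_iota_pow d A _ n

/-- The character `(-1)^• : {1, ȷ} → Aˣ`. -/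
def negOnePow : Multiplicative (ZMod 2) →* Aˣ where
  toFun x := (-1 : Aˣ) ^ (Multiplicative.toAdd x).val
  map_one' := by
    show (-1 : Aˣ) ^ (Multiplicative.toAdd (1 : Multiplicative (ZMod 2))).val = 1
    simp
  map_mul' x y := by
    show (-1 : Aˣ) ^ _ = (-1 : Aˣ) ^ _ * (-1 : Aˣ) ^ _
    rw [toAdd_mul, ZMod.val_add, ← pow_eq_pow_mod _ (neg_one_sq), pow_add]

/-- The multiplier character `ν : 𝒢_d(A) → GL_1(A)`, with `ν(g, a) = a` and `ν(ȷ) = −1`. -/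
def nu : Gcal d A →* Aˣ :=
  SemidirectProduct.lift (MonoidHom.snd _ _) (negOnePow A) (by
    intro x
    refine MonoidHom.ext fun n => ?_
    show ((phi d A x) n).2 = (MulAut.conj (negOnePow A x)) n.2
    rw [snd_phi, MulAut.conj_apply, mul_comm ((negOnePow A) x) n.2, mul_inv_cancel_right])

end PaperCHT
namespace CHT
open PaperCHT SemidirectProduct Matrix
open scoped Classical

variable {d : ℕ} {A : Type*} [CommRing A]

/-- The nontrivial element of `{1, ȷ}`. -/
abbrev jE : Multiplicative (ZMod 2) := Multiplicative.ofAdd 1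

lemma jE_mul_jE : (jE * jE : Multiplicative (ZMod 2)) = 1 := by decide

lemma jE_ne_one : (jE : Multiplicative (ZMod 2)) ≠ 1 := by decide

lemma eq_jE_of_ne_one {x : Multiplicative (ZMod 2)} (h : x ≠ 1) : x = jE := by
  revert h; revert x; decide

lemma phi_jE (n : GLd d A × Aˣ) :
    phi d A jE n = (scalarU d A n.2 * tinv d A n.1, n.2) := by
  show (iota d A ^ (Multiplicative.toAdd (jE : Multiplicative (ZMod 2))).val) n = _
  rw [(by decide : (Multiplicative.toAdd (jE : Multiplicative (ZMod 2))).val = 1), pow_one]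
  rfl

lemma mem_Gzero_iff (x : Gcal d A) : x ∈ Gzero d A ↔ x.right = 1 := by
  constructor
  · rintro ⟨n, rfl⟩; rfl
  · intro h
    exact ⟨x.left, SemidirectProduct.ext rfl h.symm⟩

lemma nu_eq (x : Gcal d A) : nu d A x = x.left.2 * negOnePow A x.right := by
  conv_lhs => rw [← inl_left_mul_inr_right x]
  rw [_root_.map_mul, nu, lift_inl, lift_inr]
  rfl

lemma negOnePow_jE : negOnePow A jE = -1 := by
  show ((-1 : Aˣ)) ^ (Multiplicative.toAdd (jE : Multiplicative (ZMod 2))).val = -1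
  rw [(by decide : (Multiplicative.toAdd (jE : Multiplicative (ZMod 2))).val = 1), pow_one]

lemma uT_val (g : GLd d A) : ((tinv d A g)⁻¹).val = (g.val)ᵀ := rfl

lemma scalarU_mul_val (m : Aˣ) (X : Matrix (Fin d) (Fin d) A) :
    (scalarU d A m).val * X = (m : A) • X := by
  rw [scalarU_val, scalar_apply]
  exact (smul_eq_diagonal_mul X (m : A)).symm

lemma grp_aux {G : Type*} [Group G] (a b c x : G) :
    a⁻¹ * b⁻¹ * x = c * b⁻¹ ↔ x * b = b * (a * c) := by
  constructor
  · intro h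
    rw [mul_assoc, inv_mul_eq_iff_eq_mul, inv_mul_eq_iff_eq_mul] at h
    rw [h]; group
  · intro h
    have hx : x = b * (a * c) * b⁻¹ := by rw [← h]; group
    rw [hx]; group

/-- Equivalence between the first matrix condition and a unit-level equation. -/
lemma eqv1 (Pu g g' : GLd d A) (m : Aˣ) :
    ((g.val)ᵀ * (Pu⁻¹).val * g'.val = (m : A) • (Pu⁻¹).val)
      ↔ g' * Pu = Pu * (scalarU d A m * tinv d A g) := by
  have hU : ((tinv d A g)⁻¹ * Pu⁻¹ * g' = scalarU d A m * Pu⁻¹)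
      ↔ ((g.val)ᵀ * (Pu⁻¹).val * g'.val = (m : A) • (Pu⁻¹).val) := by
    rw [Units.ext_iff, Units.val_mul, Units.val_mul, uT_val, Units.val_mul,
      scalarU_mul_val]
  rw [← hU, grp_aux (tinv d A g) Pu (scalarU d A m) g',
    (scalarU_commute d A m (tinv d A g)).eq]

/-- Equivalence between the second matrix condition and a unit-level equation. -/
lemma eqv2 (Pu g2 : GLd d A) (m : Aˣ) :
    ((Pu⁻¹).val * g2.val = (m : A) • ((Pu⁻¹).val)ᵀ)
      ↔ g2 = Pu * (scalarU d A m * tinv d A Pu) := by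
  have hU : (Pu⁻¹ * g2 = scalarU d A m * tinv d A Pu)
      ↔ ((Pu⁻¹).val * g2.val = (m : A) • ((Pu⁻¹).val)ᵀ) := by
    rw [Units.ext_iff, Units.val_mul, Units.val_mul, scalarU_mul_val, tinv_val]
  rw [← hU, inv_mul_eq_iff_eq_mul]

section Main

variable {Γ : Type*} [Group Γ] {Δ : Subgroup Γ} {γ₀ : Γ}

lemma not_mem_inv (hγ₀ : γ₀ ∉ Δ) : γ₀⁻¹ ∉ Δ := fun h => hγ₀ (Δ.inv_mem_iff.mp h)

lemma mem_sq (hΔ : Δ.index = 2) (hγ₀ : γ₀ ∉ Δ) : γ₀ * γ₀ ∈ Δ :=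
  (Subgroup.mul_mem_iff_of_index_two hΔ).2 Iff.rfl

lemma mem_mul_inv (hΔ : Δ.index = 2) (hγ₀ : γ₀ ∉ Δ) {γ : Γ} (h : γ ∉ Δ) :
    γ * γ₀⁻¹ ∈ Δ :=
  (Subgroup.mul_mem_iff_of_index_two hΔ).2 (iff_of_false h (not_mem_inv hγ₀))

lemma mem_conj (hΔ : Δ.index = 2) (hγ₀ : γ₀ ∉ Δ) {γ : Γ} (h : γ ∈ Δ) :
    γ₀ * γ * γ₀⁻¹ ∈ Δ := by
  refine (Subgroup.mul_mem_iff_of_index_two hΔ).2 (iff_of_false ?_ (not_mem_inv hγ₀))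
  intro hm
  exact hγ₀ (((Subgroup.mul_mem_iff_of_index_two hΔ).1 hm).2 h)

section Inverse

/-- The map `δ ↦ (ρ(δ), μ(δ))` into `𝒢_d⁰(A) ⊆ 𝒢_d(A)`. -/
def qmap (ρ : Δ →* GLd d A) (μ : Γ →* Aˣ) : Δ →* Gcal d A :=
  (SemidirectProduct.inl : (GLd d A × Aˣ) →* Gcal d A).comp (ρ.prod (μ.comp Δ.subtype))

lemma qmap_apply (ρ : Δ →* GLd d A) (μ : Γ →* Aˣ) (δ : Δ) :
    qmap ρ μ δ = (⟨(ρ δ, μ δ), 1⟩ : Gcal d A) := rfl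

/-- The element `(P, -μ(γ₀))·ȷ` of `𝒢_d(A)`. -/
def Jelt (γ₀ : Γ) (μ : Γ →* Aˣ) (P : GLd d A) : Gcal d A := ⟨(P, -(μ γ₀)), jE⟩

variable {ρ : Δ →* GLd d A} {μ : Γ →* Aˣ} {P : GLd d A}
variable (hΔ : Δ.index = 2) (hγ₀ : γ₀ ∉ Δ)
variable (h1 : ∀ δ δ' : Δ, (δ' : Γ) = γ₀ * δ * γ₀⁻¹ →
    ((ρ δ).val)ᵀ * (P⁻¹).val * (ρ δ').val = (μ (δ : Γ) : A) • (P⁻¹).val)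
variable (h2 : ∀ δ : Δ, (δ : Γ) = γ₀ * γ₀ →
    (P⁻¹).val * (ρ δ).val = (-(μ γ₀ : A)) • ((P⁻¹).val)ᵀ)

lemma nu_qmap (δ : Δ) : nu d A (qmap ρ μ δ) = μ δ := by
  rw [qmap_apply, nu_eq]
  show μ (δ : Γ) * negOnePow A 1 = μ (δ : Γ)
  rw [_root_.map_one, mul_one]

lemma nu_Jelt : nu d A (Jelt γ₀ μ P) = μ γ₀ := by
  rw [Jelt, nu_eq]
  show -(μ γ₀) * negOnePow A jE = μ γ₀
  rw [negOnePow_jE, mul_neg_one, neg_neg]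

include h1 in
lemma K1 (δ : Δ) :
    Jelt γ₀ μ P * qmap ρ μ δ
      = qmap ρ μ ⟨γ₀ * δ * γ₀⁻¹, mem_conj hΔ hγ₀ δ.2⟩ * Jelt γ₀ μ P := by
  have hF1 : ρ ⟨γ₀ * δ * γ₀⁻¹, mem_conj hΔ hγ₀ δ.2⟩ * P
      = P * (scalarU d A (μ δ) * tinv d A (ρ δ)) :=
    (eqv1 P (ρ δ) _ (μ δ)).1 (h1 δ _ rfl)
  rw [qmap_apply, qmap_apply, Jelt, mul_def, mul_def]
  refine SemidirectProduct.ext ?_ (by rw [mul_one, one_mul])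
  show (P, -(μ γ₀)) * phi d A jE (ρ δ, μ δ) = _ * phi d A 1 (P, -(μ γ₀))
  rw [phi_jE, _root_.map_one]
  refine Prod.ext ?_ ?_
  · show P * (scalarU d A (μ δ) * tinv d A (ρ δ)) = ρ _ * P
    rw [← hF1]
  · show -(μ γ₀) * μ δ = μ (γ₀ * δ * γ₀⁻¹) * -(μ γ₀)
    rw [_root_.map_mul, _root_.map_mul, _root_.map_inv, mul_comm (μ γ₀) (μ (δ : Γ)), mul_inv_cancel_right]
    exact mul_comm _ _

include h2 in
lemma K2 :
    Jelt γ₀ μ P * Jelt γ₀ μ P = qmap ρ μ ⟨γ₀ * γ₀, mem_sq hΔ hγ₀⟩ := by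
  have hF2 : ρ ⟨γ₀ * γ₀, mem_sq hΔ hγ₀⟩
      = P * (scalarU d A (-(μ γ₀)) * tinv d A P) := by
    refine (eqv2 P _ (-(μ γ₀))).1 ?_
    have h3 := h2 ⟨γ₀ * γ₀, mem_sq hΔ hγ₀⟩ rfl
    rwa [← Units.val_neg] at h3
  rw [qmap_apply, Jelt, mul_def]
  refine SemidirectProduct.ext ?_ jE_mul_jE
  show (P, -(μ γ₀)) * phi d A jE (P, -(μ γ₀)) = (ρ _, μ (γ₀ * γ₀))
  rw [phi_jE]
  refine Prod.ext ?_ ?_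
  · show P * (scalarU d A (-(μ γ₀)) * tinv d A P) = ρ _
    rw [← hF2]
  · show -(μ γ₀) * -(μ γ₀) = μ (γ₀ * γ₀)
    rw [neg_mul_neg, _root_.map_mul]

/-- The underlying function of the homomorphism built from a triple. -/
noncomputable def fAux (hΔ : Δ.index = 2) (hγ₀ : γ₀ ∉ Δ) (γ : Γ) : Gcal d A :=
  if h : γ ∈ Δ then qmap ρ μ ⟨γ, h⟩
  else qmap ρ μ ⟨γ * γ₀⁻¹, mem_mul_inv hΔ hγ₀ h⟩ * Jelt γ₀ μ P

lemma fAux_pos {γ : Γ} (h : γ ∈ Δ) :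
    fAux (ρ := ρ) (μ := μ) (P := P) hΔ hγ₀ γ = qmap ρ μ ⟨γ, h⟩ := dif_pos h

lemma fAux_neg {γ : Γ} (h : γ ∉ Δ) :
    fAux (ρ := ρ) (μ := μ) (P := P) hΔ hγ₀ γ
      = qmap ρ μ ⟨γ * γ₀⁻¹, mem_mul_inv hΔ hγ₀ h⟩ * Jelt γ₀ μ P := dif_neg h

include h1 h2 in
lemma fAux_mul (γ γ' : Γ) :
    fAux (ρ := ρ) (μ := μ) (P := P) hΔ hγ₀ (γ * γ')
      = fAux (ρ := ρ) (μ := μ) (P := P) hΔ hγ₀ γ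
          * fAux (ρ := ρ) (μ := μ) (P := P) hΔ hγ₀ γ' := by
  by_cases h : γ ∈ Δ <;> by_cases h' : γ' ∈ Δ
  · have hm : γ * γ' ∈ Δ := Δ.mul_mem h h'
    rw [fAux_pos hΔ hγ₀ hm, fAux_pos hΔ hγ₀ h, fAux_pos hΔ hγ₀ h', ← _root_.map_mul]
    exact congrArg _ (Subtype.ext rfl)
  · have hm : γ * γ' ∉ Δ := fun hmem =>
      h' (((Subgroup.mul_mem_iff_of_index_two hΔ).1 hmem).1 h)
    rw [fAux_neg hΔ hγ₀ hm, fAux_pos hΔ hγ₀ h, fAux_neg hΔ hγ₀ h',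
      ← mul_assoc (qmap ρ μ ⟨γ, h⟩), ← _root_.map_mul]
    refine congrArg (· * Jelt γ₀ μ P) (congrArg _ (Subtype.ext ?_))
    show γ * γ' * γ₀⁻¹ = γ * (γ' * γ₀⁻¹)
    group
  · have hm : γ * γ' ∉ Δ := fun hmem =>
      h (((Subgroup.mul_mem_iff_of_index_two hΔ).1 hmem).2 h')
    rw [fAux_neg hΔ hγ₀ hm, fAux_neg hΔ hγ₀ h, fAux_pos hΔ hγ₀ h',
      mul_assoc (qmap ρ μ ⟨γ * γ₀⁻¹, mem_mul_inv hΔ hγ₀ h⟩) (Jelt γ₀ μ P),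
      K1 hΔ hγ₀ h1 ⟨γ', h'⟩,
      ← mul_assoc (qmap ρ μ ⟨γ * γ₀⁻¹, mem_mul_inv hΔ hγ₀ h⟩), ← _root_.map_mul]
    refine congrArg (· * Jelt γ₀ μ P) (congrArg _ (Subtype.ext ?_))
    show γ * γ' * γ₀⁻¹ = γ * γ₀⁻¹ * (γ₀ * γ' * γ₀⁻¹)
    group
  · have hm : γ * γ' ∈ Δ := (Subgroup.mul_mem_iff_of_index_two hΔ).2
      (iff_of_false h h')
    rw [fAux_pos hΔ hγ₀ hm, fAux_neg hΔ hγ₀ h, fAux_neg hΔ hγ₀ h',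
      mul_assoc (qmap ρ μ ⟨γ * γ₀⁻¹, mem_mul_inv hΔ hγ₀ h⟩) (Jelt γ₀ μ P),
      ← mul_assoc (Jelt γ₀ μ P), K1 hΔ hγ₀ h1 ⟨γ' * γ₀⁻¹, mem_mul_inv hΔ hγ₀ h'⟩,
      mul_assoc (qmap ρ μ ⟨γ₀ * ↑(⟨γ' * γ₀⁻¹, mem_mul_inv hΔ hγ₀ h'⟩ : Δ) * γ₀⁻¹,
        mem_conj hΔ hγ₀ (⟨γ' * γ₀⁻¹, mem_mul_inv hΔ hγ₀ h'⟩ : Δ).2⟩) (Jelt γ₀ μ P),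
      K2 hΔ hγ₀ h2,
      ← mul_assoc (qmap ρ μ ⟨γ * γ₀⁻¹, mem_mul_inv hΔ hγ₀ h⟩),
      ← _root_.map_mul, ← _root_.map_mul]
    refine congrArg _ (Subtype.ext ?_)
    show γ * γ' = γ * γ₀⁻¹ * (γ₀ * (γ' * γ₀⁻¹) * γ₀⁻¹) * (γ₀ * γ₀)
    group

/-- The homomorphism `Γ →* 𝒢_d(A)` built from a triple `(ρ, μ, P)`. -/
noncomputable def fmap : Γ →* Gcal d A :=
  MonoidHom.mk' (fAux (ρ := ρ) (μ := μ) (P := P) hΔ hγ₀) (fAux_mul hΔ hγ₀ h1 h2)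

lemma fmap_pos {γ : Γ} (h : γ ∈ Δ) :
    fmap hΔ hγ₀ h1 h2 γ = qmap ρ μ ⟨γ, h⟩ := fAux_pos hΔ hγ₀ h

lemma fmap_neg {γ : Γ} (h : γ ∉ Δ) :
    fmap hΔ hγ₀ h1 h2 γ
      = qmap ρ μ ⟨γ * γ₀⁻¹, mem_mul_inv hΔ hγ₀ h⟩ * Jelt γ₀ μ P := fAux_neg hΔ hγ₀ h

lemma fmap_mem (γ : Γ) : fmap hΔ hγ₀ h1 h2 γ ∈ Gzero d A ↔ γ ∈ Δ := by
  by_cases h : γ ∈ Δ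
  · refine iff_of_true ?_ h
    rw [fmap_pos hΔ hγ₀ h1 h2 h, mem_Gzero_iff, qmap_apply]
  · refine iff_of_false ?_ h
    rw [fmap_neg hΔ hγ₀ h1 h2 h, mem_Gzero_iff, qmap_apply]
    show ¬ ((1 : Multiplicative (ZMod 2)) * jE = 1)
    rw [one_mul]
    exact jE_ne_one

end Inverse

section Forward

variable (Δ)
variable (r : Γ →* Gcal d A) (hr : ∀ γ : Γ, r γ ∈ Gzero d A ↔ γ ∈ Δ)

/-- The `GL_d`-component of `r` restricted to `Δ`. -/
def rhoOf : Δ →* GLd d A where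
  toFun δ := (r δ).left.1
  map_one' := by
    show (r ((1 : Δ) : Γ)).left.1 = 1
    have h0 : ((1 : Δ) : Γ) = 1 := rfl
    rw [h0, _root_.map_one]
    rfl
  map_mul' δ δ' := by
    have hone : (r δ).right = 1 := (mem_Gzero_iff _).1 ((hr δ).2 δ.2)
    show (r (↑δ * ↑δ')).left.1 = _
    rw [_root_.map_mul, mul_left, hone, _root_.map_one]
    rfl

variable {Δ r}

lemma r_coe (δ : Δ) :
    r δ = (⟨(rhoOf Δ r hr δ, nu d A (r δ)), 1⟩ : Gcal d A) := by
  have hone : (r δ).right = 1 := (mem_Gzero_iff _).1 ((hr δ).2 δ.2)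
  refine SemidirectProduct.ext (Prod.ext rfl ?_) hone
  rw [nu_eq, hone]
  show (r (δ : Γ)).left.2 = (r (δ : Γ)).left.2 * negOnePow A 1
  rw [_root_.map_one, mul_one]

variable (hγ₀ : γ₀ ∉ Δ)

include hr hγ₀ in
lemma r_gamma0 :
    r γ₀ = (⟨((r γ₀).left.1, -(nu d A (r γ₀))), jE⟩ : Gcal d A) := by
  have h2 : (r γ₀).right = jE :=
    eq_jE_of_ne_one (fun h => hγ₀ ((hr γ₀).1 ((mem_Gzero_iff _).2 h)))
  refine SemidirectProduct.ext (Prod.ext rfl ?_) h2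
  rw [nu_eq, h2, negOnePow_jE, mul_neg_one, neg_neg]

include hγ₀ in
lemma forward_h1 (δ δ' : Δ) (hδ' : (δ' : Γ) = γ₀ * δ * γ₀⁻¹) :
    ((rhoOf Δ r hr δ).val)ᵀ * ((((r γ₀).left.1))⁻¹).val * (rhoOf Δ r hr δ').val
      = (nu d A (r δ) : A) • ((((r γ₀).left.1))⁻¹).val := by
  refine (eqv1 _ _ _ _).2 ?_
  have hcomm : r γ₀ * r δ = r δ' * r γ₀ := by
    rw [← _root_.map_mul, ← _root_.map_mul]
    exact congrArg r (by rw [hδ']; group)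
  rw [r_coe hr δ, r_coe hr δ', r_gamma0 hr hγ₀, mul_def, mul_def] at hcomm
  simp only [SemidirectProduct.ext_iff, phi_jE, _root_.map_one, MulAut.one_apply,
    Prod.mk_mul_mk, Prod.mk.injEq] at hcomm
  exact hcomm.1.1.symm

include hγ₀ in
lemma forward_h2 (δ : Δ) (hδ : (δ : Γ) = γ₀ * γ₀) :
    ((((r γ₀).left.1))⁻¹).val * (rhoOf Δ r hr δ).val
      = (-(nu d A (r γ₀) : A)) • (((((r γ₀).left.1))⁻¹).val)ᵀ := by
  rw [← Units.val_neg]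
  refine (eqv2 _ _ _).2 ?_
  have hcomm : r γ₀ * r γ₀ = r δ := by
    rw [← _root_.map_mul]
    exact congrArg r hδ.symm
  rw [r_coe hr δ, r_gamma0 hr hγ₀, mul_def] at hcomm
  simp only [SemidirectProduct.ext_iff, phi_jE, Prod.mk_mul_mk, Prod.mk.injEq] at hcomm
  exact hcomm.1.1.symm

end Forward

end Main

end CHT

open PaperCHT in
/-- **Clozel–Harris–Taylor parametrization of `𝒢_d`-valued homomorphisms.**
For a group `Γ` with an index-2 subgroup `Δ` and `γ₀ ∈ Γ ∖ Δ`, homomorphisms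
`r : Γ → 𝒢_d(A)` with `r⁻¹(𝒢_d⁰(A)) = Δ` correspond bijectively to triples `(ρ, μ, P)`
with `ρ : Δ → GL_d(A)`, `μ : Γ → Aˣ` and `P ∈ GL_d(A)` satisfying
`ρ(δ)ᵀ·P⁻¹·ρ(γ₀δγ₀⁻¹) = μ(δ)·P⁻¹` and `P⁻¹·ρ(γ₀²) = −μ(γ₀)·(Pᵀ)⁻¹`; under the bijection
`ρ` is the `GL_d`-component of `r|_Δ`, `μ = ν ∘ r`, and `r(γ₀) = (P, −μ(γ₀))·ȷ`. -/
theorem statement0 {Γ : Type*} [Group Γ] (Δ : Subgroup Γ) (hΔ : Δ.index = 2)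
    (γ₀ : Γ) (hγ₀ : γ₀ ∉ Δ) (d : ℕ) (hd : 1 ≤ d) (A : Type*) [CommRing A] :
    ∃ e : {r : Γ →* Gcal d A // ∀ γ : Γ, r γ ∈ Gzero d A ↔ γ ∈ Δ} ≃
        {t : (Δ →* GLd d A) × (Γ →* Aˣ) × GLd d A //
          (∀ δ δ' : Δ, (δ' : Γ) = γ₀ * δ * γ₀⁻¹ →
            ((t.1 δ).val)ᵀ * (t.2.2⁻¹).val * (t.1 δ').val
              = (t.2.1 (δ : Γ) : A) • (t.2.2⁻¹).val) ∧
          (∀ δ : Δ, (δ : Γ) = γ₀ * γ₀ →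
            (t.2.2⁻¹).val * (t.1 δ).val
              = (-(t.2.1 γ₀ : A)) • ((t.2.2⁻¹).val)ᵀ)},
      ∀ r : {r : Γ →* Gcal d A // ∀ γ : Γ, r γ ∈ Gzero d A ↔ γ ∈ Δ},
        (∀ δ : Δ, (r.val (δ : Γ)).left.1 = (e r).val.1 δ) ∧
        (∀ γ : Γ, nu d A (r.val γ) = (e r).val.2.1 γ) ∧
        r.val γ₀ = ⟨((e r).val.2.2, -((e r).val.2.1 γ₀)), Multiplicative.ofAdd 1⟩ := by

  classical
  refine ⟨⟨fun r => ⟨(CHT.rhoOf Δ r.1 r.2, (nu d A).comp r.1, (r.1 γ₀).left.1),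
      fun δ δ' hδ' => CHT.forward_h1 r.2 hγ₀ δ δ' hδ',
      fun δ hδ => CHT.forward_h2 r.2 hγ₀ δ hδ⟩,
    fun t => ⟨CHT.fmap hΔ hγ₀ t.2.1 t.2.2, CHT.fmap_mem hΔ hγ₀ t.2.1 t.2.2⟩,
    fun r => ?_, fun t => ?_⟩,
    fun r => ⟨fun δ => rfl, fun γ => rfl, CHT.r_gamma0 r.2 hγ₀⟩⟩
  · -- left inverse
    refine Subtype.ext (MonoidHom.ext fun γ => ?_)
    by_cases h : γ ∈ Δ
    · rw [CHT.fmap_pos hΔ hγ₀ _ _ h]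
      exact (CHT.r_coe r.2 ⟨γ, h⟩).symm
    · rw [CHT.fmap_neg hΔ hγ₀ _ _ h]
      have e2 : r.1 ((⟨γ * γ₀⁻¹, CHT.mem_mul_inv hΔ hγ₀ h⟩ : Δ) : Γ) * r.1 γ₀
          = r.1 γ := by
        rw [← _root_.map_mul]
        exact congrArg r.1 (show γ * γ₀⁻¹ * γ₀ = γ by group)
      refine Eq.trans ?_ e2
      exact congrArg₂ (· * ·)
        (CHT.r_coe r.2 ⟨γ * γ₀⁻¹, CHT.mem_mul_inv hΔ hγ₀ h⟩).symm
        (CHT.r_gamma0 r.2 hγ₀).symm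
  · -- right inverse
    obtain ⟨⟨ρ, μ, P⟩, h1, h2⟩ := t
    refine Subtype.ext ?_
    simp only [Prod.mk.injEq]
    refine ⟨?_, ?_, ?_⟩
    · refine MonoidHom.ext fun δ => ?_
      show ((CHT.fmap hΔ hγ₀ h1 h2) (δ : Γ)).left.1 = ρ δ
      rw [CHT.fmap_pos hΔ hγ₀ h1 h2 δ.2]
      rfl
    · refine MonoidHom.ext fun γ => ?_
      show nu d A ((CHT.fmap hΔ hγ₀ h1 h2) γ) = μ γ
      by_cases h : γ ∈ Δ
      · rw [CHT.fmap_pos hΔ hγ₀ h1 h2 h, CHT.nu_qmap]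
      · rw [CHT.fmap_neg hΔ hγ₀ h1 h2 h, _root_.map_mul, CHT.nu_qmap, CHT.nu_Jelt, ← _root_.map_mul]
        exact congrArg μ (show γ * γ₀⁻¹ * γ₀ = γ by group)
    · show ((CHT.fmap hΔ hγ₀ h1 h2) γ₀).left.1 = P
      rw [CHT.fmap_neg hΔ hγ₀ h1 h2 hγ₀]
      have e3 : (⟨γ₀ * γ₀⁻¹, CHT.mem_mul_inv hΔ hγ₀ hγ₀⟩ : Δ) = 1 :=
        Subtype.ext (mul_inv_cancel γ₀)
      rw [e3, _root_.map_one, one_mul]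
      rfl
end

section
/- Let k be a field, let Γ be a group with a subgroup Δ of index 2, and let c ∈ Γ ∖ Δ with c² = 1. Let ρ : Δ → GL_d(k) and μ : Γ → kˣ be group homomorphisms with μ(c) = −1, and let P ∈ GL_d(k) satisfy Pᵀ = P and ρ(δ)ᵀ · P⁻¹ · ρ(cδc) = μ(δ) · P⁻¹ for all δ ∈ Δ. Then there exists a unique group homomorphism Ad : Γ → GL_k(M_d(k)) (k-linear automorphisms of the space of d×d matrices) such that Ad(δ)(X) = ρ(δ)·X·ρ(δ)⁻¹ for all δ ∈ Δ and Ad(c)(X) = −P·Xᵀ·P⁻¹. Moreover, Ad is unchanged if P is replaced by λ·P for any λ ∈ kˣ. -/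
open Matrix

section Aux
variable {k : Type*} [Field k] {d : ℕ}

private def LR (A B : Matrix (Fin d) (Fin d) k) :
    Module.End k (Matrix (Fin d) (Fin d) k) :=
  (LinearMap.mulLeft k A).comp (LinearMap.mulRight k B)

private lemma LR_apply (A B X : Matrix (Fin d) (Fin d) k) :
    LR A B X = A * X * B := by
  simp [LR, mul_assoc]

private def conjU (A : (Matrix (Fin d) (Fin d) k)ˣ) :
    (Module.End k (Matrix (Fin d) (Fin d) k))ˣ where
  val := LR A.val (A⁻¹).val
  inv := LR (A⁻¹).val A.val
  val_inv := by
    ext X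
    simp [Module.End.mul_apply, LR_apply, mul_assoc, -Matrix.coe_units_inv]
  inv_val := by
    ext X
    simp [Module.End.mul_apply, LR_apply, mul_assoc, -Matrix.coe_units_inv]

private lemma conjU_val_apply (A : (Matrix (Fin d) (Fin d) k)ˣ)
    (X : Matrix (Fin d) (Fin d) k) :
    (conjU A).val X = A.val * X * (A⁻¹).val := LR_apply _ _ _

private lemma conjU_mul (A B : (Matrix (Fin d) (Fin d) k)ˣ) :
    conjU (A * B) = conjU A * conjU B := by
  apply Units.ext
  apply LinearMap.ext
  intro X
  simp [Units.val_mul, Module.End.mul_apply, conjU_val_apply, _root_.mul_inv_rev,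
    mul_assoc, -Matrix.coe_units_inv]

private lemma conjU_one : conjU (1 : (Matrix (Fin d) (Fin d) k)ˣ) = 1 := by
  apply Units.ext
  apply LinearMap.ext
  intro X
  simp [conjU_val_apply, -Matrix.coe_units_inv]

private def sEnd (P : (Matrix (Fin d) (Fin d) k)ˣ) :
    Module.End k (Matrix (Fin d) (Fin d) k) where
  toFun X := -(P.val * Xᵀ * (P⁻¹).val)
  map_add' X Y := by
    simp only [Matrix.transpose_add, Matrix.add_mul, Matrix.mul_add]
    abel
  map_smul' a X := by
    simp [Matrix.transpose_smul, Matrix.smul_mul, Matrix.mul_smul, -Matrix.coe_units_inv]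

private lemma sEnd_apply (P : (Matrix (Fin d) (Fin d) k)ˣ) (X : Matrix (Fin d) (Fin d) k) :
    sEnd P X = -(P.val * Xᵀ * (P⁻¹).val) := rfl

private lemma Pinv_symm (P : (Matrix (Fin d) (Fin d) k)ˣ) (hPsym : (P.val)ᵀ = P.val) :
    ((P⁻¹).val)ᵀ = (P⁻¹).val := by
  have h1 : ((P⁻¹).val)ᵀ * P.val = 1 := by
    calc ((P⁻¹).val)ᵀ * P.val = ((P⁻¹).val)ᵀ * (P.val)ᵀ := by rw [hPsym]
    _ = (P.val * (P⁻¹).val)ᵀ := (transpose_mul _ _).symm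
    _ = 1 := by rw [Units.mul_inv, transpose_one]
  calc ((P⁻¹).val)ᵀ = ((P⁻¹).val)ᵀ * (P.val * (P⁻¹).val) := by rw [Units.mul_inv, mul_one]
  _ = (((P⁻¹).val)ᵀ * P.val) * (P⁻¹).val := (mul_assoc _ _ _).symm
  _ = (P⁻¹).val := by rw [h1, one_mul]

private lemma sEnd_sq (P : (Matrix (Fin d) (Fin d) k)ˣ) (hPsym : (P.val)ᵀ = P.val) :
    sEnd P * sEnd P = 1 := by
  apply LinearMap.ext
  intro X
  rw [Module.End.mul_apply, sEnd_apply, sEnd_apply]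
  simp [Module.End.one_apply, transpose_neg, transpose_mul, transpose_transpose,
    hPsym, Pinv_symm P hPsym, mul_assoc, -Matrix.coe_units_inv]

private lemma key (P : (Matrix (Fin d) (Fin d) k)ˣ) (hPsym : (P.val)ᵀ = P.val)
    (A B : (Matrix (Fin d) (Fin d) k)ˣ) (m : kˣ)
    (h : (A.val)ᵀ * (P⁻¹).val * B.val = (m : k) • (P⁻¹).val) :
    sEnd P * (conjU A).val = (conjU B).val * sEnd P := by
  have htA : ((A⁻¹).val)ᵀ * (A.val)ᵀ = 1 := by
    rw [← transpose_mul, Units.mul_inv, transpose_one]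
  have htA' : ((A.val))ᵀ * ((A⁻¹).val)ᵀ = 1 := by
    rw [← transpose_mul, Units.inv_mul, transpose_one]
  have hPiB : (P⁻¹).val * B.val = (m : k) • (((A⁻¹).val)ᵀ * (P⁻¹).val) := by
    calc (P⁻¹).val * B.val
        = ((A⁻¹).val)ᵀ * ((A.val)ᵀ * (P⁻¹).val * B.val) := by
          rw [← mul_assoc, ← mul_assoc, htA, one_mul]
    _ = (m : k) • (((A⁻¹).val)ᵀ * (P⁻¹).val) := by rw [h, Matrix.mul_smul]
  have hBval : B.val = (m : k) • (P.val * ((A⁻¹).val)ᵀ * (P⁻¹).val) := by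
    calc B.val = P.val * ((P⁻¹).val * B.val) := by
          rw [← mul_assoc, Units.mul_inv, one_mul]
    _ = (m : k) • (P.val * ((A⁻¹).val)ᵀ * (P⁻¹).val) := by
          rw [hPiB, Matrix.mul_smul, mul_assoc]
  have hBinvmul : B.val * (((m⁻¹ : kˣ) : k) • (P.val * (A.val)ᵀ * (P⁻¹).val)) = 1 := by
    rw [hBval, Matrix.smul_mul, Matrix.mul_smul, smul_smul, Units.mul_inv, one_smul]
    simp only [mul_assoc]
    rw [Units.inv_mul_cancel_left, ← mul_assoc ((A⁻¹).val)ᵀ, htA, one_mul, Units.mul_inv]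
  have hBinv : (B⁻¹).val = ((m⁻¹ : kˣ) : k) • (P.val * (A.val)ᵀ * (P⁻¹).val) := by
    calc (B⁻¹).val
        = (B⁻¹).val * (B.val * (((m⁻¹ : kˣ) : k) • (P.val * (A.val)ᵀ * (P⁻¹).val))) := by
          rw [hBinvmul, mul_one]
    _ = _ := by rw [← mul_assoc, Units.inv_mul, one_mul]
  apply LinearMap.ext
  intro X
  rw [Module.End.mul_apply, Module.End.mul_apply, conjU_val_apply, conjU_val_apply,
    sEnd_apply, sEnd_apply, hBval, hBinv]
  simp only [Matrix.smul_mul, Matrix.mul_smul, smul_smul, mul_neg, neg_mul, smul_neg,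
    transpose_mul, transpose_transpose, mul_assoc, Units.inv_mul_cancel_left, neg_inj]
  rw [Units.inv_mul, one_smul]

end Aux

/-- **Extension of the adjoint action to `Gal(F(S)/F⁺)`.**
Let `Δ ≤ Γ` have index 2, `c ∈ Γ ∖ Δ` with `c² = 1`, let `ρ : Δ → GL_d(k)`, `μ : Γ → kˣ`
with `μ(c) = −1`, and let `P` be a symmetric invertible matrix with
`ρ(δ)ᵀ·P⁻¹·ρ(cδc) = μ(δ)·P⁻¹` for all `δ ∈ Δ`.  Then there is a unique homomorphism
`Ad : Γ → GL_k(M_d(k))` acting by `X ↦ ρ(δ)Xρ(δ)⁻¹` on `Δ` and by `X ↦ −P·Xᵀ·P⁻¹` at `c`;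
moreover `Ad` is unchanged when `P` is replaced by `λ·P` for `λ ∈ kˣ`. -/
theorem statement2 {k : Type*} [Field k] {Γ : Type*} [Group Γ] (Δ : Subgroup Γ)
    (hΔ : Δ.index = 2) (c : Γ) (hc : c ∉ Δ) (hc2 : c * c = 1) {d : ℕ}
    (ρ : Δ →* (Matrix (Fin d) (Fin d) k)ˣ) (μ : Γ →* kˣ) (hμc : μ c = -1)
    (P : (Matrix (Fin d) (Fin d) k)ˣ) (hPsym : (P.val)ᵀ = P.val)
    (hpair : ∀ δ δ' : Δ, (δ' : Γ) = c * δ * c →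
      ((ρ δ).val)ᵀ * (P⁻¹).val * (ρ δ').val = (μ (δ : Γ) : k) • (P⁻¹).val) :
    (∃! Ad : Γ →* (Module.End k (Matrix (Fin d) (Fin d) k))ˣ,
      (∀ (δ : Δ) (X : Matrix (Fin d) (Fin d) k),
        (Ad (δ : Γ)).val X = (ρ δ).val * X * ((ρ δ)⁻¹).val) ∧
      (∀ X : Matrix (Fin d) (Fin d) k,
        (Ad c).val X = -(P.val * Xᵀ * (P⁻¹).val))) ∧
    (∀ (lam : kˣ) (Q : (Matrix (Fin d) (Fin d) k)ˣ), Q.val = (lam : k) • P.val →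
      ∀ Ad' : Γ →* (Module.End k (Matrix (Fin d) (Fin d) k))ˣ,
        ((∀ (δ : Δ) (X : Matrix (Fin d) (Fin d) k),
            (Ad' (δ : Γ)).val X = (ρ δ).val * X * ((ρ δ)⁻¹).val) ∧
          (∀ X : Matrix (Fin d) (Fin d) k,
            (Ad' c).val X = -(Q.val * Xᵀ * (Q⁻¹).val))) →
        ((∀ (δ : Δ) (X : Matrix (Fin d) (Fin d) k),
            (Ad' (δ : Γ)).val X = (ρ δ).val * X * ((ρ δ)⁻¹).val) ∧
          (∀ X : Matrix (Fin d) (Fin d) k,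
            (Ad' c).val X = -(P.val * Xᵀ * (P⁻¹).val)))) := by
  classical
  constructor
  · -- existence and uniqueness
    have hmul : ∀ a b : Γ, a * b ∈ Δ ↔ (a ∈ Δ ↔ b ∈ Δ) := fun a b =>
      Subgroup.mul_mem_iff_of_index_two hΔ
    have hmemc : ∀ γ, γ ∉ Δ → γ * c ∈ Δ := fun γ h =>
      (hmul γ c).mpr (iff_of_false h hc)
    have hdc : ∀ δ : Δ, (δ : Γ) * c ∉ Δ := by
      intro δ h
      exact hc (((hmul _ c).mp h).mp δ.2)
    have hcdc : ∀ δ : Δ, c * (δ : Γ) * c ∈ Δ := by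
      intro δ
      rw [mul_assoc]
      exact (hmul c _).mpr (iff_of_false hc (hdc δ))
    -- the extra unit at `c`
    set S : (Module.End k (Matrix (Fin d) (Fin d) k))ˣ :=
      ⟨sEnd P, sEnd P, sEnd_sq P hPsym, sEnd_sq P hPsym⟩ with hSdef
    have hSS : S * S = 1 := Units.ext (sEnd_sq P hPsym)
    have hS : ∀ δ : Δ, S * conjU (ρ δ) = conjU (ρ ⟨c * (δ : Γ) * c, hcdc δ⟩) * S := by
      intro δ
      apply Units.ext
      exact key P hPsym (ρ δ) (ρ ⟨c * (δ : Γ) * c, hcdc δ⟩) (μ (δ : Γ))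
        (hpair δ ⟨c * (δ : Γ) * c, hcdc δ⟩ rfl)
    have hcc : ∀ x : Γ, c * (c * x) = x := fun x => by rw [← mul_assoc, hc2, one_mul]
    have main : ∃ Ad : Γ →* (Module.End k (Matrix (Fin d) (Fin d) k))ˣ,
        (∀ (δ : Δ) (X : Matrix (Fin d) (Fin d) k),
          (Ad (δ : Γ)).val X = (ρ δ).val * X * ((ρ δ)⁻¹).val) ∧
        (∀ X : Matrix (Fin d) (Fin d) k,
          (Ad c).val X = -(P.val * Xᵀ * (P⁻¹).val)) := by
      refine ⟨{ toFun := fun γ => if h : γ ∈ Δ then conjU (ρ ⟨γ, h⟩)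
                  else conjU (ρ ⟨γ * c, hmemc γ h⟩) * S,
                map_one' := ?_, map_mul' := ?_ }, ?_, ?_⟩
      · rw [dif_pos Δ.one_mem]
        have : (⟨(1 : Γ), Δ.one_mem⟩ : Δ) = 1 := rfl
        rw [this, _root_.map_one, conjU_one]
      · intro a b
        by_cases ha : a ∈ Δ <;> by_cases hb : b ∈ Δ
        · have hab : a * b ∈ Δ := (hmul a b).mpr (iff_of_true ha hb)
          rw [dif_pos hab, dif_pos ha, dif_pos hb]
          have he : (⟨a * b, hab⟩ : Δ) = ⟨a, ha⟩ * ⟨b, hb⟩ := rfl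
          rw [he, _root_.map_mul, conjU_mul]
        · have hab : a * b ∉ Δ := fun h => hb (((hmul a b).mp h).mp ha)
          rw [dif_neg hab, dif_pos ha, dif_neg hb]
          have he : (⟨a * b * c, hmemc _ hab⟩ : Δ) = ⟨a, ha⟩ * ⟨b * c, hmemc b hb⟩ :=
            Subtype.ext (mul_assoc a b c)
          rw [he, _root_.map_mul, conjU_mul, mul_assoc]
        · have hab : a * b ∉ Δ := fun h => ha (((hmul a b).mp h).mpr hb)
          rw [dif_neg hab, dif_pos hb, dif_neg ha]
          rw [mul_assoc (conjU (ρ ⟨a * c, hmemc a ha⟩)) S (conjU (ρ ⟨b, hb⟩)), hS ⟨b, hb⟩,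
            ← mul_assoc, ← conjU_mul, ← _root_.map_mul]
          have he : (⟨a * b * c, hmemc _ hab⟩ : Δ)
              = ⟨a * c, hmemc a ha⟩ * ⟨c * ((⟨b, hb⟩ : Δ) : Γ) * c, hcdc ⟨b, hb⟩⟩ := by
            apply Subtype.ext
            show a * b * c = a * c * (c * b * c)
            rw [mul_assoc c b c, ← mul_assoc (a * c), mul_assoc a c c, hc2, mul_one,
              ← mul_assoc]
          rw [he]
        · have hab : a * b ∈ Δ := (hmul a b).mpr (iff_of_false ha hb)
          rw [dif_pos hab, dif_neg ha, dif_neg hb]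
          have step : conjU (ρ ⟨a * c, hmemc a ha⟩) * S * (conjU (ρ ⟨b * c, hmemc b hb⟩) * S)
              = conjU (ρ ⟨a * c, hmemc a ha⟩)
                * conjU (ρ ⟨c * ((⟨b * c, hmemc b hb⟩ : Δ) : Γ) * c,
                    hcdc ⟨b * c, hmemc b hb⟩⟩) * (S * S) := by
            rw [mul_assoc (conjU (ρ ⟨a * c, hmemc a ha⟩)), ← mul_assoc S, hS ⟨b * c, hmemc b hb⟩]
            simp only [mul_assoc]
          have he : (⟨a * b, hab⟩ : Δ)
              = ⟨a * c, hmemc a ha⟩ * ⟨c * ((⟨b * c, hmemc b hb⟩ : Δ) : Γ) * c,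
                  hcdc ⟨b * c, hmemc b hb⟩⟩ := by
            apply Subtype.ext
            show a * b = a * c * (c * (b * c) * c)
            rw [mul_assoc c (b * c) c, mul_assoc b c c, hc2, mul_one,
              mul_assoc a c _, hcc]
          rw [step, hSS, mul_one, ← conjU_mul, ← _root_.map_mul, he]
      · -- property on Δ
        intro δ X
        show (dite _ _ _ : (Module.End k (Matrix (Fin d) (Fin d) k))ˣ).val X = _
        rw [dif_pos δ.2]
        rw [Subtype.coe_eta, conjU_val_apply]
      · -- property at c
        intro X
        show (dite _ _ _ : (Module.End k (Matrix (Fin d) (Fin d) k))ˣ).val X = _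
        rw [dif_neg hc]
        have he : (⟨c * c, hmemc c hc⟩ : Δ) = 1 := Subtype.ext hc2
        rw [he, _root_.map_one, conjU_one, one_mul]
        exact sEnd_apply P X
    obtain ⟨Ad, hAd1, hAd2⟩ := main
    refine ⟨Ad, ⟨hAd1, hAd2⟩, ?_⟩
    rintro Ad' ⟨h1', h2'⟩
    have hstep : ∀ x, x ∈ Δ → Ad' x = Ad x := by
      intro x hx
      apply Units.ext
      apply LinearMap.ext
      intro X
      calc (Ad' x).val X = (ρ ⟨x, hx⟩).val * X * ((ρ ⟨x, hx⟩)⁻¹).val := h1' ⟨x, hx⟩ X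
      _ = (Ad x).val X := (hAd1 ⟨x, hx⟩ X).symm
    have hstepc : Ad' c = Ad c := by
      apply Units.ext
      apply LinearMap.ext
      intro X
      rw [h2' X, ← hAd2 X]
    apply MonoidHom.ext
    intro γ
    by_cases hγ : γ ∈ Δ
    · exact hstep γ hγ
    · have hγeq : γ = (γ * c) * c := by rw [mul_assoc, hc2, mul_one]
      rw [hγeq, _root_.map_mul Ad' (γ * c) c, _root_.map_mul Ad (γ * c) c,
        hstep _ (hmemc γ hγ), hstepc]
  · -- independence of scaling
    rintro lam Q hQ Ad' ⟨h1', h2'⟩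
    refine ⟨h1', fun X => ?_⟩
    have hQinv : (Q⁻¹).val = ((lam⁻¹ : kˣ) : k) • (P⁻¹).val := by
      have h1 : Q.val * (((lam⁻¹ : kˣ) : k) • (P⁻¹).val) = 1 := by
        rw [hQ, Matrix.smul_mul, Matrix.mul_smul, smul_smul, Units.mul_inv, one_smul,
          Units.mul_inv]
      calc (Q⁻¹).val = (Q⁻¹).val * (Q.val * (((lam⁻¹ : kˣ) : k) • (P⁻¹).val)) := by
            rw [h1, mul_one]
      _ = _ := by rw [← mul_assoc, Units.inv_mul, one_mul]
    rw [h2' X, hQ, hQinv, Matrix.smul_mul, Matrix.mul_smul, Matrix.smul_mul, smul_smul,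
      Units.inv_mul, one_smul]
end
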